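/- If X : [t₀, T) → M_n(ℝ) is differentiable and satisfies X'(t) + A(t)·X(t) + X(t)·B(t) = F(t), then the scalar function y(t) = det X(t) is differentiable and satisfies the linear ODE y'(t) + tr(A(t)+B(t))·y(t) = tr(adj(X(t))·F(t)) for all t in [t₀, T). -/

import Mathlib

open Matrix

-- Derivative of the determinant: (det X)' = trace (adjugate X * X')
lemma hasDerivAt_det_aux {n : ℕ} (X X' : ℝ → Matrix (Fin n) (Fin n) ℝ) (t : ℝ)
    (hX : ∀ i j, HasDerivAt (fun s => X s i j) (X' t i j) t) :
    HasDerivAt (fun s => (X s).det) (((X t).adjugate * X' t).trace) t := by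
  have key : HasDerivAt (fun s => ∑ σ : Equiv.Perm (Fin n),
      ((Equiv.Perm.sign σ : ℤ) : ℝ) * ∏ i, X s (σ i) i)
      (∑ σ : Equiv.Perm (Fin n), ((Equiv.Perm.sign σ : ℤ) : ℝ) *
        ∑ i ∈ Finset.univ, (∏ j ∈ Finset.univ.erase i, X t (σ j) j) * X' t (σ i) i) t := by
    apply HasDerivAt.fun_sum
    intro σ _
    exact (HasDerivAt.fun_finsetProd (fun i _ => hX (σ i) i)).const_mul _
  have heq : ∀ s, (X s).det = ∑ σ : Equiv.Perm (Fin n),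
      ((Equiv.Perm.sign σ : ℤ) : ℝ) * ∏ i, X s (σ i) i := by
    intro s
    rw [Matrix.det_apply]
    refine Finset.sum_congr rfl fun σ _ => ?_
    rw [Units.smul_def, zsmul_eq_mul]
  have hval : (∑ σ : Equiv.Perm (Fin n), ((Equiv.Perm.sign σ : ℤ) : ℝ) *
        ∑ i ∈ Finset.univ, (∏ j ∈ Finset.univ.erase i, X t (σ j) j) * X' t (σ i) i)
      = ((X t).adjugate * X' t).trace := by
    have h1 : ((X t).adjugate * X' t).trace
        = ∑ i, ((X t).updateCol i (fun k => X' t k i)).det := by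
      rw [Matrix.trace]
      refine Finset.sum_congr rfl fun i _ => ?_
      rw [← Matrix.cramer_apply, Matrix.cramer_eq_adjugate_mulVec]
      simp [Matrix.diag, Matrix.mul_apply, Matrix.mulVec, dotProduct]
    rw [h1]
    simp_rw [Finset.mul_sum]
    rw [Finset.sum_comm]
    refine Finset.sum_congr rfl fun i _ => ?_
    rw [Matrix.det_apply]
    refine Finset.sum_congr rfl fun σ _ => ?_
    rw [Units.smul_def, zsmul_eq_mul]
    rw [← Finset.mul_prod_erase Finset.univ _ (Finset.mem_univ i)]
    rw [Matrix.updateCol_apply]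
    simp only [if_pos rfl]
    have : ∀ j ∈ Finset.univ.erase i, ((X t).updateCol i fun k => X' t k i) (σ j) j
        = X t (σ j) j := by
      intro j hj
      rw [Matrix.updateCol_apply, if_neg (Finset.ne_of_mem_erase hj)]
    rw [Finset.prod_congr rfl this]
    simp [mul_comm]
  rw [← hval]
  exact key.congr_of_eventuallyEq (by filter_upwards with s using (heq s))

theorem stmt_3 {n : ℕ} (t₀ T : ℝ) (X X' A B F : ℝ → Matrix (Fin n) (Fin n) ℝ)
    (hA : ContinuousOn A (Set.Ico t₀ T)) (hB : ContinuousOn B (Set.Ico t₀ T))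
    (hF : ContinuousOn F (Set.Ico t₀ T))
    (hX : ∀ t ∈ Set.Ico t₀ T, ∀ i j, HasDerivAt (fun s => X s i j) (X' t i j) t)
    (hODE : ∀ t ∈ Set.Ico t₀ T, X' t + A t * X t + X t * B t = F t) :
    ∀ t ∈ Set.Ico t₀ T,
      HasDerivAt (fun s => (X s).det)
        (((X t).adjugate * F t).trace - (A t + B t).trace * (X t).det) t := by
  intro t ht
  have hdet := hasDerivAt_det_aux X X' t (hX t ht)
  convert hdet using 1
  rw [← hODE t ht]
  rw [mul_add, mul_add, Matrix.trace_add, Matrix.trace_add]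
  have hA' : ((X t).adjugate * (A t * X t)).trace = (X t).det * (A t).trace := by
    rw [← Matrix.mul_assoc, Matrix.trace_mul_cycle, Matrix.mul_adjugate]
    simp [Matrix.smul_mul, Matrix.trace_smul, smul_eq_mul]
  have hB' : ((X t).adjugate * (X t * B t)).trace = (X t).det * (B t).trace := by
    rw [← Matrix.mul_assoc, Matrix.adjugate_mul]
    simp [Matrix.smul_mul, Matrix.trace_smul, smul_eq_mul]
  rw [hA', hB', Matrix.trace_add]
  ring
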